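/- If V₁,...,V_{n+1} are exchangeable and almost surely have no ties, then the conformal p-value P = (1 + #{i ≤ n : Vᵢ ≥ V_{n+1}})/(n+1) is uniformly distributed on {1/(n+1), 2/(n+1), ..., 1}. -/

import Mathlib

open MeasureTheory Finset
open scoped ENNReal

noncomputable def rnk (n : ℕ) (v : Fin (n+1) → ℝ) (j : Fin (n+1)) : ℕ :=
  (Finset.univ.filter (fun i => i ≠ j ∧ v j ≤ v i)).card

lemma measurable_rnk (n : ℕ) (j : Fin (n+1)) :
    Measurable fun v : Fin (n+1) → ℝ => rnk n v j := by
  have h : (fun v : Fin (n+1) → ℝ => rnk n v j)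
      = fun v => ∑ i : Fin (n+1), if i ≠ j ∧ v j ≤ v i then 1 else 0 := by
    funext v; rw [rnk, Finset.card_filter]
  rw [h]
  refine Finset.measurable_sum _ fun i _ => Measurable.ite ?_ measurable_const measurable_const
  by_cases h : i = j
  · simp [h]
  · simpa [h] using measurableSet_le (measurable_pi_apply j) (measurable_pi_apply i)

lemma rnk_comp (n : ℕ) (σ : Equiv.Perm (Fin (n+1))) (v : Fin (n+1) → ℝ) (j : Fin (n+1)) :
    rnk n (v ∘ σ) j = rnk n v (σ j) := by
  unfold rnk
  apply Finset.card_bij (fun i _ => σ i)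
  · intro a ha
    simp only [mem_filter, mem_univ, true_and, Function.comp] at ha ⊢
    exact ⟨fun h => ha.1 (σ.injective h), ha.2⟩
  · intro a _ b _ h; exact σ.injective h
  · intro b hb
    simp only [mem_filter, mem_univ, true_and, Function.comp] at hb ⊢
    exact ⟨σ.symm b, ⟨fun h => hb.1 (by rw [← σ.apply_symm_apply b, h]),
      by simpa using hb.2⟩, by simp⟩

lemma rnk_eq_strict (n : ℕ) (v : Fin (n+1) → ℝ) (hv : Function.Injective v) (j : Fin (n+1)) :
    rnk n v j = (Finset.univ.filter (fun i => v j < v i)).card := by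
  unfold rnk
  congr 1
  ext i
  simp only [mem_filter, mem_univ, true_and]
  constructor
  · rintro ⟨hne, hle⟩
    exact lt_of_le_of_ne hle (fun h => hne (hv h.symm))
  · intro h
    exact ⟨fun he => absurd (he ▸ h) (lt_irrefl _), le_of_lt h⟩

lemma rnk_lt (n : ℕ) (v : Fin (n+1) → ℝ) (hv : Function.Injective v)
    {j j' : Fin (n+1)} (h : v j < v j') : rnk n v j' < rnk n v j := by
  rw [rnk_eq_strict n v hv, rnk_eq_strict n v hv]
  apply Finset.card_lt_card
  rw [Finset.ssubset_iff_of_subset]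
  · exact ⟨j', by simp [h], by simp⟩
  · intro i hi
    simp only [mem_filter, mem_univ, true_and] at hi ⊢
    exact h.trans hi

lemma rnk_inj (n : ℕ) (v : Fin (n+1) → ℝ) (hv : Function.Injective v) :
    Function.Injective (rnk n v) := by
  intro j j' h
  by_contra hne
  rcases lt_or_gt_of_ne (fun he : v j = v j' => hne (hv he)) with hl | hl
  · exact absurd h (Nat.ne_of_lt (rnk_lt n v hv hl)).symm
  · exact absurd h (Nat.ne_of_lt (rnk_lt n v hv hl))

lemma rnk_le (n : ℕ) (v : Fin (n+1) → ℝ) (j : Fin (n+1)) : rnk n v j ≤ n := by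
  unfold rnk
  calc (Finset.univ.filter (fun i => i ≠ j ∧ v j ≤ v i)).card
      ≤ (Finset.univ.erase j).card := by
        apply Finset.card_le_card
        intro i hi
        simp only [mem_filter, mem_univ, true_and] at hi
        simp [hi.1]
    _ = n := by simp

lemma rnk_exists_unique (n : ℕ) (v : Fin (n+1) → ℝ) (hv : Function.Injective v)
    (k : Fin (n+1)) : ∃! j, rnk n v j = (k : ℕ) := by
  set e : Fin (n+1) → Fin (n+1) := fun j => ⟨rnk n v j, Nat.lt_succ_of_le (rnk_le n v j)⟩
  have he : Function.Injective e := fun a b h => rnk_inj n v hv (by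
    simpa [e, Fin.ext_iff] using h)
  have hs : Function.Surjective e := Finite.surjective_of_injective he
  obtain ⟨j, hj⟩ := hs k
  have hjk : rnk n v j = (k : ℕ) := by simpa [e, Fin.ext_iff] using hj
  exact ⟨j, hjk, fun j' hj' => he (by simp [e, Fin.ext_iff, hj', hjk])⟩

/-- With exchangeable, almost surely tie-free scores, the conformal p-value is
uniformly distributed on `{1/(n+1), …, 1}`. -/
theorem conformal_pvalue_uniform
    {Ω : Type*} [MeasurableSpace Ω] (μ : Measure Ω) [IsProbabilityMeasure μ]
    (n : ℕ) (V : Fin (n + 1) → Ω → ℝ) (hmeas : ∀ i, Measurable (V i))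
    (hexch : ∀ σ : Equiv.Perm (Fin (n + 1)),
      Measure.map (fun ω i => V (σ i) ω) μ = Measure.map (fun ω i => V i ω) μ)
    (hnoties : ∀ i j : Fin (n + 1), i ≠ j → μ {ω | V i ω = V j ω} = 0)
    (P : Ω → ℝ)
    (hP : ∀ ω, P ω = (1 + (Finset.univ.filter
        (fun i : Fin n => V (Fin.last n) ω ≤ V i.castSucc ω)).card : ℝ) / (n + 1)) :
    ∀ k : Fin (n + 1), μ {ω | P ω = ((k : ℕ) + 1 : ℝ) / (n + 1)} = 1 / (n + 1) := by
  intro k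
  set X : Ω → (Fin (n+1) → ℝ) := fun ω i => V i ω with hX
  have hXm : Measurable X := measurable_pi_lambda _ fun i => hmeas i
  -- the event in terms of rnk
  have hcard : ∀ ω, (Finset.univ.filter
      (fun i : Fin n => V (Fin.last n) ω ≤ V i.castSucc ω)).card
      = rnk n (X ω) (Fin.last n) := by
    intro ω
    unfold rnk
    apply Finset.card_bij (fun (i : Fin n) _ => i.castSucc)
    · intro a ha
      simp only [Finset.mem_filter, Finset.mem_univ, true_and] at ha ⊢
      exact ⟨(Fin.castSucc_lt_last a).ne, ha⟩
    · intro a _ b _ h; exact Fin.castSucc_injective n h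
    · intro b hb
      simp only [Finset.mem_filter, Finset.mem_univ, true_and] at hb
      refine ⟨b.castPred (hb.1), by simp [hb.2]; exact hb.2, by simp⟩
  have hset : {ω | P ω = ((k : ℕ) + 1 : ℝ) / (n + 1)}
      = {ω | rnk n (X ω) (Fin.last n) = (k : ℕ)} := by
    ext ω
    simp only [Set.mem_setOf_eq, hP ω, hcard ω]
    have hn : ((n:ℝ) + 1) ≠ 0 := by positivity
    rw [div_eq_div_iff hn hn]
    constructor
    · intro h
      have h2 := mul_right_cancel₀ hn h
      have : ((rnk n (X ω) (Fin.last n) : ℝ)) = ((k : ℕ) : ℝ) := by linarith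
      exact_mod_cast this
    · intro h; rw [h]; ring
  rw [hset]
  -- events
  set A : Fin (n+1) → Set Ω := fun j => {ω | rnk n (X ω) j = (k : ℕ)} with hA
  have hAm : ∀ j, MeasurableSet (A j) := fun j =>
    (measurable_rnk n j (measurableSet_singleton ((k : ℕ)))).preimage hXm
  -- all A j have the same measure
  have hsame : ∀ j, μ (A j) = μ (A (Fin.last n)) := by
    intro j
    set σ : Equiv.Perm (Fin (n+1)) := Equiv.swap j (Fin.last n) with hσ
    have hcm : Measurable (fun v : Fin (n+1) → ℝ => v ∘ σ) :=
      measurable_pi_lambda _ fun i => measurable_pi_apply _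
    have hmap : Measure.map (fun v : Fin (n+1) → ℝ => v ∘ σ) (Measure.map X μ)
        = Measure.map X μ := by
      calc Measure.map (fun v : Fin (n+1) → ℝ => v ∘ σ) (Measure.map X μ)
          = Measure.map ((fun v : Fin (n+1) → ℝ => v ∘ σ) ∘ X) μ :=
            Measure.map_map hcm hXm
        _ = Measure.map (fun ω i => V (σ i) ω) μ := rfl
        _ = Measure.map X μ := hexch σ
    have hS : MeasurableSet {v : Fin (n+1) → ℝ | rnk n v (Fin.last n) = (k : ℕ)} :=
      measurable_rnk n (Fin.last n) (measurableSet_singleton _)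
    have h1 : μ (A (Fin.last n)) = Measure.map X μ {v | rnk n v (Fin.last n) = (k : ℕ)} := by
      rw [Measure.map_apply hXm hS]; rfl
    have hSj : MeasurableSet {v : Fin (n+1) → ℝ | rnk n v j = (k : ℕ)} :=
      measurable_rnk n j (measurableSet_singleton _)
    have h2 : μ (A j) = Measure.map X μ {v | rnk n v j = (k : ℕ)} := by
      rw [Measure.map_apply hXm hSj]; rfl
    rw [h1, h2, ← hmap, Measure.map_apply hcm hS]
    congr 1
    ext v
    simp only [Set.mem_preimage, Set.mem_setOf_eq, rnk_comp n σ v (Fin.last n)]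
    have : σ (Fin.last n) = j := Equiv.swap_apply_right j (Fin.last n)
    rw [this]
  -- good event: no ties
  set G : Set Ω := {ω | Function.Injective (X ω)} with hG
  have hGc : μ Gᶜ = 0 := by
    have hsub : Gᶜ ⊆ ⋃ p : Fin (n+1) × Fin (n+1),
        {ω | p.1 ≠ p.2 ∧ V p.1 ω = V p.2 ω} := by
      intro ω hω
      simp only [hG, Set.mem_compl_iff, Set.mem_setOf_eq, Function.Injective] at hω
      push_neg at hω
      obtain ⟨a, b, hab, hne⟩ := hω
      exact Set.mem_iUnion.2 ⟨(a, b), hne, hab⟩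
    refine le_antisymm (le_trans (measure_mono hsub) ?_) zero_le
    refine le_trans (measure_iUnion_le _) ?_
    refine le_of_eq (ENNReal.tsum_eq_zero.2 fun p => ?_)
    by_cases hp : p.1 = p.2
    · convert measure_empty (μ := μ)
      ext ω; simp [hp]
    · exact le_antisymm (le_trans (measure_mono fun ω hω => hω.2) (le_of_eq (hnoties p.1 p.2 hp))) zero_le
  have hG1 : μ G = 1 := by
    have : (1 : ℝ≥0∞) ≤ μ G := by
      calc (1:ℝ≥0∞) = μ Set.univ := (measure_univ).symm
        _ ≤ μ G + μ Gᶜ := by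
            rw [← Set.union_compl_self G] ; exact measure_union_le _ _
        _ = μ G := by rw [hGc, add_zero]
    exact le_antisymm prob_le_one this
  -- a.e. disjoint cover
  have hcover : G ⊆ ⋃ j ∈ Finset.univ, A j := by
    intro ω hω
    obtain ⟨j, hj, _⟩ := rnk_exists_unique n (X ω) hω k
    exact Set.mem_biUnion (Finset.mem_univ j) hj
  have hdisj : (↑(Finset.univ : Finset (Fin (n+1))) : Set (Fin (n+1))).Pairwise
      (Function.onFun (MeasureTheory.AEDisjoint μ) A) := by
    intro j _ j' _ hne
    refine measure_mono_null (fun ω hω => ?_) hGc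
    rintro (hωG : ω ∈ G)
    obtain ⟨j0, _, huniq⟩ := rnk_exists_unique n (X ω) hωG k
    exact hne ((huniq j hω.1).trans (huniq j' hω.2).symm)
  have hsum : ∑ j : Fin (n+1), μ (A j) = μ (⋃ j ∈ Finset.univ, A j) :=
    (measure_biUnion_finset₀ hdisj fun j _ => (hAm j).nullMeasurableSet).symm
  have hone : μ (⋃ j ∈ Finset.univ, A j) = 1 :=
    le_antisymm prob_le_one (hG1 ▸ measure_mono hcover)
  have htot : (n + 1 : ℝ≥0∞) * μ (A (Fin.last n)) = 1 := by
    have : ∑ j : Fin (n+1), μ (A j) = (n+1 : ℝ≥0∞) * μ (A (Fin.last n)) := by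
      rw [Finset.sum_congr rfl fun j _ => hsame j]
      simp [Finset.sum_const, mul_comm]
    rw [← this, hsum, hone]
  have hne : ((n:ℝ≥0∞) + 1) ≠ 0 := by simp
  have hnt : ((n:ℝ≥0∞) + 1) ≠ ⊤ := by
    simp [ENNReal.add_ne_top]
  have hA_eq : μ (A (Fin.last n)) = 1 / ((n:ℝ≥0∞) + 1) := by
    rw [ENNReal.eq_div_iff hne hnt]
    exact htot
  exact hA_eq
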